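/- Let G be a connected graph (with a loop at every vertex), r ≡ 0 (mod 3), r ≥ 6, diam(G) ≥ r. If x, y are vertices with d(x,y) = r, then x is sufficient or y is sufficient. -/

import Mathlib

/-- The ball of radius `r` around `v` (the `r`-th neighbourhood `N^r(v)`). -/
def SimpleGraph.distBall {V : Type*} (G : SimpleGraph V) (r : ℕ) (v : V) : Set V :=
  {u : V | G.dist v u ≤ r}

/-- A vertex is *sufficient* if `|N^r(v)| ≥ (r/3 + 1)·δ`, where `δ = G.minDegree + 1`
is the minimum degree of the graph with a loop at every vertex. -/
def SimpleGraph.Sufficient {V : Type*} [Fintype V] (G : SimpleGraph V)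
    [DecidableRel G.Adj] (r : ℕ) (v : V) : Prop :=
  (r / 3 + 1) * (G.minDegree + 1) ≤ (G.distBall r v).ncard


section Aux

variable {V : Type*}

private lemma getVert_dists {G : SimpleGraph V} (hG : G.Connected) {u v : V} (p : G.Walk u v) :
    ∀ j, j ≤ p.length →
      G.dist u (p.getVert j) ≤ j ∧ G.dist (p.getVert j) v ≤ p.length - j := by
  induction p with
  | nil =>
      intro j hj
      have : j = 0 := Nat.le_zero.mp hj
      subst this
      simp
  | @cons a b c hadj q ih =>
      intro j hj
      cases j with
      | zero =>
          refine ⟨by simp, ?_⟩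
          simpa using SimpleGraph.dist_le (SimpleGraph.Walk.cons hadj q)
      | succ j =>
          rw [SimpleGraph.Walk.getVert_cons_succ]
          have hj' : j ≤ q.length := by
            simp only [SimpleGraph.Walk.length_cons] at hj; omega
          obtain ⟨h1, h2⟩ := ih j hj'
          have hab : G.dist a b ≤ 1 := by
            simpa using SimpleGraph.dist_le (SimpleGraph.Walk.cons hadj SimpleGraph.Walk.nil)
          have htri := hG.dist_triangle (u := a) (v := b) (w := q.getVert j)
          constructor
          · omega
          · simp only [SimpleGraph.Walk.length_cons]; omega

private lemma exists_geodesic {G : SimpleGraph V} (hG : G.Connected) (u v : V) :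
    ∃ f : ℕ → V, ∀ j, j ≤ G.dist u v →
      G.dist u (f j) = j ∧ G.dist (f j) v = G.dist u v - j := by
  obtain ⟨p, hp⟩ := hG.exists_walk_length_eq_dist u v
  refine ⟨p.getVert, fun j hj => ?_⟩
  obtain ⟨h1, h2⟩ := getVert_dists hG p j (by omega)
  have htri := hG.dist_triangle (u := u) (v := p.getVert j) (w := v)
  constructor <;> omega

private lemma card_le_ball_ncard [Fintype V] (G : SimpleGraph V) [DecidableRel G.Adj]
    (hG : G.Connected) (r : ℕ) (c : V) (S : Finset V)
    (hfar : ∀ u ∈ S, ∀ v ∈ S, u ≠ v → 3 ≤ G.dist u v)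
    (hball : ∀ u ∈ S, ∀ w : V, G.dist u w ≤ 1 → G.dist c w ≤ r) :
    S.card * (G.minDegree + 1) ≤ (G.distBall r c).ncard := by
  classical
  set N : V → Finset V := fun u => insert u (G.neighborFinset u) with hN
  have hmem : ∀ u w : V, w ∈ N u → G.dist u w ≤ 1 := by
    intro u w hw
    simp only [hN, Finset.mem_insert, SimpleGraph.mem_neighborFinset] at hw
    rcases hw with rfl | hadj
    · simp [SimpleGraph.dist_self]
    · simpa using SimpleGraph.dist_le (SimpleGraph.Walk.cons hadj SimpleGraph.Walk.nil)
  have hdisj : ∀ u ∈ S, ∀ v ∈ S, u ≠ v → Disjoint (N u) (N v) := by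
    intro u hu v hv huv
    rw [Finset.disjoint_left]
    intro w hwu hwv
    have h1 := hmem u w hwu
    have h2 := hmem v w hwv
    have h3 := hfar u hu v hv huv
    have htri := hG.dist_triangle (u := u) (v := w) (w := v)
    have hcw : G.dist w v = G.dist v w := SimpleGraph.dist_comm ..
    omega
  have hcardN : ∀ u : V, G.minDegree + 1 ≤ (N u).card := by
    intro u
    have h1 : u ∉ G.neighborFinset u := by
      simp [SimpleGraph.mem_neighborFinset, G.irrefl]
    have h2 : (N u).card = G.degree u + 1 := by
      simp [hN, Finset.card_insert_of_notMem h1, SimpleGraph.card_neighborFinset_eq_degree]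
    have h3 := G.minDegree_le_degree u
    omega
  have hsum : S.card * (G.minDegree + 1) ≤ (S.biUnion N).card := by
    rw [Finset.card_biUnion hdisj]
    calc S.card * (G.minDegree + 1) = ∑ _u ∈ S, (G.minDegree + 1) := by
          rw [Finset.sum_const, smul_eq_mul, mul_comm]
      _ ≤ ∑ u ∈ S, (N u).card := Finset.sum_le_sum fun u _ => hcardN u
  have hsub : ((S.biUnion N : Finset V) : Set V) ⊆ G.distBall r c := by
    intro w hw
    simp only [Finset.coe_biUnion, Set.mem_iUnion, Finset.mem_coe] at hw
    obtain ⟨u, hu, hwu⟩ := hw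
    exact hball u hu w (hmem u w hwu)
  calc S.card * (G.minDegree + 1) ≤ (S.biUnion N).card := hsum
    _ = ((S.biUnion N : Finset V) : Set V).ncard := (Set.ncard_coe_finset _).symm
    _ ≤ (G.distBall r c).ncard := Set.ncard_le_ncard hsub (Set.toFinite _)

private lemma sufficient_of_points [Fintype V] (G : SimpleGraph V) [DecidableRel G.Adj]
    (hG : G.Connected) (r k : ℕ) (hrk : r = 3 * k) (c h : V) (f : ℕ → V)
    (hff : ∀ i j, i < k → j < k → i ≠ j → 3 ≤ G.dist (f i) (f j))
    (hfh : ∀ i, i < k → 3 ≤ G.dist h (f i))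
    (hballf : ∀ i, i < k → ∀ w, G.dist (f i) w ≤ 1 → G.dist c w ≤ r)
    (hballh : ∀ w, G.dist h w ≤ 1 → G.dist c w ≤ r) :
    G.Sufficient r c := by
  classical
  have hne : ∀ i, i < k → ∀ j, j < k → i ≠ j → f i ≠ f j := by
    intro i hi j hj hij heq
    have := hff i j hi hj hij
    rw [heq] at this
    simp [SimpleGraph.dist_self] at this
  have hneh : ∀ i, i < k → f i ≠ h := by
    intro i hi heq
    have := hfh i hi
    rw [heq] at this
    simp [SimpleGraph.dist_self] at this
  set S : Finset V := insert h ((Finset.range k).image f) with hS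
  have hcard : S.card = k + 1 := by
    rw [hS, Finset.card_insert_of_notMem, Finset.card_image_of_injOn]
    · simp
    · intro i hi j hj hij
      simp only [Finset.coe_range, Set.mem_Iio] at hi hj
      by_contra hne'
      exact hne i hi j hj hne' hij
    · simp only [Finset.mem_image, Finset.mem_range, not_exists]
      intro i hi
      exact hneh i hi.1 hi.2
  have hfar : ∀ u ∈ S, ∀ v ∈ S, u ≠ v → 3 ≤ G.dist u v := by
    intro u hu v hv huv
    simp only [hS, Finset.mem_insert, Finset.mem_image, Finset.mem_range] at hu hv
    rcases hu with rfl | ⟨i, hi, rfl⟩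
    · rcases hv with rfl | ⟨j, hj, rfl⟩
      · exact absurd rfl huv
      · exact hfh j hj
    · rcases hv with rfl | ⟨j, hj, rfl⟩
      · rw [SimpleGraph.dist_comm]; exact hfh i hi
      · refine hff i j hi hj ?_
        rintro rfl; exact huv rfl
  have hball : ∀ u ∈ S, ∀ w : V, G.dist u w ≤ 1 → G.dist c w ≤ r := by
    intro u hu w hw
    simp only [hS, Finset.mem_insert, Finset.mem_image, Finset.mem_range] at hu
    rcases hu with rfl | ⟨i, hi, rfl⟩
    · exact hballh w hw
    · exact hballf i hi w hw
  have hmain := card_le_ball_ncard G hG r c S hfar hball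
  rw [hcard] at hmain
  have hdiv : r / 3 = k := by omega
  rw [SimpleGraph.Sufficient, hdiv]
  exact hmain

end Aux

/-- if `r ≡ 0 (mod 3)`, `r ≥ 6`, `diam(G) ≥ r` and `d(x,y) = r`, then
`x` or `y` is sufficient. -/
theorem edge_growth_distance_r_sufficient {V : Type*} [Fintype V]
    (G : SimpleGraph V) [DecidableRel G.Adj] (hG : G.Connected)
    (r : ℕ) (hr3 : r % 3 = 0) (hr : 6 ≤ r)
    (hdiam : ∃ u w : V, r ≤ G.dist u w)
    (x y : V) (hd : G.dist x y = r) :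
    G.Sufficient r x ∨ G.Sufficient r y := by
  classical
  set k := r / 3 with hk
  have hrk : r = 3 * k := by omega
  have hk2 : 2 ≤ k := by omega
  -- geodesic from x to y
  obtain ⟨px, hpx⟩ := exists_geodesic hG x y
  have hpx' : ∀ j, j ≤ r → G.dist x (px j) = j ∧ G.dist (px j) y = r - j := by
    intro j hj; have := hpx j (by omega); rwa [hd] at this
  by_cases hecc : ∀ v : V, G.dist x v ≤ r
  · -- Case C0 : everything is within distance r of x
    left
    refine sufficient_of_points G hG r k hrk x y (fun i => px (3 * i)) ?_ ?_ ?_ ?_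
    · intro i j hi hj hij
      beta_reduce at *
      have h1 := (hpx' (3 * i) (by omega)).1
      have h2 := (hpx' (3 * j) (by omega)).1
      have t1 := hG.dist_triangle (u := x) (v := px (3 * i)) (w := px (3 * j))
      have t2 := hG.dist_triangle (u := x) (v := px (3 * j)) (w := px (3 * i))
      have hc : G.dist (px (3 * j)) (px (3 * i)) = G.dist (px (3 * i)) (px (3 * j)) :=
        SimpleGraph.dist_comm ..
      omega
    · intro i hi
      beta_reduce at *
      have h2 := (hpx' (3 * i) (by omega)).2
      have hc : G.dist y (px (3 * i)) = G.dist (px (3 * i)) y := SimpleGraph.dist_comm ..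
      omega
    · intro i _ w _; exact hecc w
    · intro w _; exact hecc w
  · -- there is a vertex at distance exactly r+1 from x
    push_neg at hecc
    obtain ⟨v, hv⟩ := hecc
    obtain ⟨g, hg⟩ := exists_geodesic hG x v
    set z := g (r + 1) with hz
    have hxz : G.dist x z = r + 1 := (hg (r + 1) (by omega)).1
    obtain ⟨qx, hqx⟩ := exists_geodesic hG x z
    have hqx' : ∀ j, j ≤ r + 1 → G.dist x (qx j) = j ∧ G.dist (qx j) z = r + 1 - j := by
      intro j hj; have := hqx j (by omega); rwa [hxz] at this
    set s := G.dist y z with hs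
    have hsub : s ≤ 2 * r + 1 := by
      have t := hG.dist_triangle (u := y) (v := x) (w := z)
      have hc : G.dist y x = G.dist x y := SimpleGraph.dist_comm ..
      omega
    rcases le_or_gt s 2 with hs2 | hs2
    · -- Case C1 : d(y,z) ≤ 2
      right
      have hpx1 := hpx' 1 (by omega)
      refine sufficient_of_points G hG r k hrk y (px 1) (fun i => qx (3 * i + 4)) ?_ ?_ ?_ ?_
      · intro i j hi hj hij
        beta_reduce at *
        have h1 := (hqx' (3 * i + 4) (by omega)).1
        have h2 := (hqx' (3 * j + 4) (by omega)).1
        have t1 := hG.dist_triangle (u := x) (v := qx (3 * i + 4)) (w := qx (3 * j + 4))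
        have t2 := hG.dist_triangle (u := x) (v := qx (3 * j + 4)) (w := qx (3 * i + 4))
        have hc : G.dist (qx (3 * j + 4)) (qx (3 * i + 4)) =
            G.dist (qx (3 * i + 4)) (qx (3 * j + 4)) := SimpleGraph.dist_comm ..
        omega
      · intro i hi
        beta_reduce at *
        have h1 := (hqx' (3 * i + 4) (by omega)).1
        have t1 := hG.dist_triangle (u := x) (v := px 1) (w := qx (3 * i + 4))
        omega
      · intro i hi w hw
        beta_reduce at *
        have h2 := (hqx' (3 * i + 4) (by omega)).2
        have t1 := hG.dist_triangle (u := y) (v := z) (w := qx (3 * i + 4))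
        have t2 := hG.dist_triangle (u := y) (v := qx (3 * i + 4)) (w := w)
        have hc : G.dist z (qx (3 * i + 4)) = G.dist (qx (3 * i + 4)) z :=
          SimpleGraph.dist_comm ..
        omega
      · intro w hw
        beta_reduce at *
        have t1 := hG.dist_triangle (u := y) (v := px 1) (w := w)
        have hc : G.dist y (px 1) = G.dist (px 1) y := SimpleGraph.dist_comm ..
        omega
    · rcases le_or_gt s (r - 1) with hsr | hsr
      · -- Case C2 : 3 ≤ d(y,z) ≤ r-1
        right
        refine sufficient_of_points G hG r k hrk y z (fun i => px (3 * i + 3)) ?_ ?_ ?_ ?_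
        · intro i j hi hj hij
          beta_reduce at *
          have h1 := (hpx' (3 * i + 3) (by omega)).1
          have h2 := (hpx' (3 * j + 3) (by omega)).1
          have t1 := hG.dist_triangle (u := x) (v := px (3 * i + 3)) (w := px (3 * j + 3))
          have t2 := hG.dist_triangle (u := x) (v := px (3 * j + 3)) (w := px (3 * i + 3))
          have hc : G.dist (px (3 * j + 3)) (px (3 * i + 3)) =
              G.dist (px (3 * i + 3)) (px (3 * j + 3)) := SimpleGraph.dist_comm ..
          omega
        · intro i hi
          beta_reduce at *
          have h1 := (hpx' (3 * i + 3) (by omega)).1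
          have h2 := (hpx' (3 * i + 3) (by omega)).2
          have t1 := hG.dist_triangle (u := x) (v := px (3 * i + 3)) (w := z)
          have t2 := hG.dist_triangle (u := y) (v := px (3 * i + 3)) (w := z)
          have hc1 : G.dist y (px (3 * i + 3)) = G.dist (px (3 * i + 3)) y :=
            SimpleGraph.dist_comm ..
          have hc2 : G.dist z (px (3 * i + 3)) = G.dist (px (3 * i + 3)) z :=
            SimpleGraph.dist_comm ..
          omega
        · intro i hi w hw
          beta_reduce at *
          have h2 := (hpx' (3 * i + 3) (by omega)).2
          have t1 := hG.dist_triangle (u := y) (v := px (3 * i + 3)) (w := w)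
          have hc : G.dist y (px (3 * i + 3)) = G.dist (px (3 * i + 3)) y :=
            SimpleGraph.dist_comm ..
          omega
        · intro w hw
          beta_reduce at *
          have t1 := hG.dist_triangle (u := y) (v := z) (w := w)
          omega
      · rcases le_or_gt s (r + 1) with hsR | hsR
        · -- Case C3 : r ≤ d(y,z) ≤ r + 1
          right
          obtain ⟨ry, hry⟩ := exists_geodesic hG y z
          have hry' : ∀ j, j ≤ s → G.dist y (ry j) = j ∧ G.dist (ry j) z = s - j := by
            intro j hj; exact hry j (by omega)
          have hpx1 := hpx' 1 (by omega)
          refine sufficient_of_points G hG r k hrk y (px 1) (fun i => ry (3 * i + 1)) ?_ ?_ ?_ ?_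
          · intro i j hi hj hij
            beta_reduce at *
            have h1 := (hry' (3 * i + 1) (by omega)).1
            have h2 := (hry' (3 * j + 1) (by omega)).1
            have t1 := hG.dist_triangle (u := y) (v := ry (3 * i + 1)) (w := ry (3 * j + 1))
            have t2 := hG.dist_triangle (u := y) (v := ry (3 * j + 1)) (w := ry (3 * i + 1))
            have hc : G.dist (ry (3 * j + 1)) (ry (3 * i + 1)) =
                G.dist (ry (3 * i + 1)) (ry (3 * j + 1)) := SimpleGraph.dist_comm ..
            omega
          · intro i hi
            beta_reduce at *
            -- need dist (px 1) (ry (3i+1)) ≥ 3 via d(x, ry (3i+1)) ≥ 4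
            have h1 := (hry' (3 * i + 1) (by omega)).1
            have h2 := (hry' (3 * i + 1) (by omega)).2
            -- d(x, u) ≥ r - (3i+1)  and  d(x,u) ≥ (r+1) - (s - (3i+1))
            have t1 := hG.dist_triangle (u := x) (v := ry (3 * i + 1)) (w := y)
            have t2 := hG.dist_triangle (u := x) (v := ry (3 * i + 1)) (w := z)
            have t3 := hG.dist_triangle (u := x) (v := px 1) (w := ry (3 * i + 1))
            have hc1 : G.dist (ry (3 * i + 1)) y = G.dist y (ry (3 * i + 1)) :=
              SimpleGraph.dist_comm ..
            omega
          · intro i hi w hw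
            beta_reduce at *
            have h1 := (hry' (3 * i + 1) (by omega)).1
            have t1 := hG.dist_triangle (u := y) (v := ry (3 * i + 1)) (w := w)
            omega
          · intro w hw
            beta_reduce at *
            have t1 := hG.dist_triangle (u := y) (v := px 1) (w := w)
            have hc : G.dist y (px 1) = G.dist (px 1) y := SimpleGraph.dist_comm ..
            omega
        · -- Case C4 : d(y,z) ≥ r + 2 : x is sufficient
          left
          have hpxr := hpx' (r - 1) (by omega)
          refine sufficient_of_points G hG r k hrk x (px (r - 1))
            (fun i => qx (3 * i + 1)) ?_ ?_ ?_ ?_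
          · intro i j hi hj hij
            beta_reduce at *
            have h1 := (hqx' (3 * i + 1) (by omega)).1
            have h2 := (hqx' (3 * j + 1) (by omega)).1
            have t1 := hG.dist_triangle (u := x) (v := qx (3 * i + 1)) (w := qx (3 * j + 1))
            have t2 := hG.dist_triangle (u := x) (v := qx (3 * j + 1)) (w := qx (3 * i + 1))
            have hc : G.dist (qx (3 * j + 1)) (qx (3 * i + 1)) =
                G.dist (qx (3 * i + 1)) (qx (3 * j + 1)) := SimpleGraph.dist_comm ..
            omega
          · intro i hi
            beta_reduce at *
            -- need dist (px (r-1)) (qx (3i+1)) ≥ 3 via d(y, qx(3i+1)) ≥ 4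
            have h1 := (hqx' (3 * i + 1) (by omega)).1
            have h2 := (hqx' (3 * i + 1) (by omega)).2
            -- d(y,u) ≥ s - (r - 3i)  and  d(y,u) ≥ r - (3i+1)
            have t1 := hG.dist_triangle (u := y) (v := qx (3 * i + 1)) (w := z)
            have t2 := hG.dist_triangle (u := x) (v := qx (3 * i + 1)) (w := y)
            have t3 := hG.dist_triangle (u := y) (v := px (r - 1)) (w := qx (3 * i + 1))
            have hc1 : G.dist (qx (3 * i + 1)) y = G.dist y (qx (3 * i + 1)) :=
              SimpleGraph.dist_comm ..
            have hc2 : G.dist y x = G.dist x y := SimpleGraph.dist_comm ..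
            have hc3 : G.dist (px (r - 1)) y = G.dist y (px (r - 1)) :=
              SimpleGraph.dist_comm ..
            have hc4 : G.dist (px (r - 1)) (qx (3 * i + 1)) =
                G.dist (qx (3 * i + 1)) (px (r - 1)) := SimpleGraph.dist_comm ..
            omega
          · intro i hi w hw
            beta_reduce at *
            have h1 := (hqx' (3 * i + 1) (by omega)).1
            have t1 := hG.dist_triangle (u := x) (v := qx (3 * i + 1)) (w := w)
            omega
          · intro w hw
            beta_reduce at *
            have t1 := hG.dist_triangle (u := x) (v := px (r - 1)) (w := w)
            omega
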